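/- Let K, L ⊆ ℝⁿ be convex bodies with centroid at the origin, and let λ₁, λ₂ > 0 satisfy (1/λ₁)·K ⊆ L ⊆ λ₂·K. Then the Binet–Legendre ellipsoids satisfy E(K) ⊆ λ₁^{(n+2)/2}·λ₂^{n/2}·E(L) and E(L) ⊆ λ₁^{n/2}·λ₂^{(n+2)/2}·E(K). -/

import Mathlib

open Set Metric Pointwise MeasureTheory

/-- The centroid (center of mass) of a set `K ⊆ ℝⁿ`. -/
noncomputable def centroid {n : ℕ} (K : Set (EuclideanSpace ℝ (Fin n))) :
    EuclideanSpace ℝ (Fin n) :=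
  (volume K).toReal⁻¹ • ∫ x in K, x

/-- The Binet–Legendre ellipsoid of a centered convex body `K ⊆ ℝⁿ`: the polar of
the unit ball of the inner product `⟨φ, ψ⟩_K = ((n+2)/vol K) ∫_K φ ψ` on the dual. -/
def binetLegendre {n : ℕ} (K : Set (EuclideanSpace ℝ (Fin n))) :
    Set (EuclideanSpace ℝ (Fin n)) :=
  {x | ∀ φ : EuclideanSpace ℝ (Fin n) →ₗ[ℝ] ℝ,
    ((n : ℝ) + 2) / (volume K).toReal * ∫ y in K, (φ y) ^ 2 ≤ 1 → φ x ≤ 1}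

lemma BL.integral_smul_set {n : ℕ} (s : Set (EuclideanSpace ℝ (Fin n)))
    (φ : EuclideanSpace ℝ (Fin n) →ₗ[ℝ] ℝ) {R : ℝ} (hR : 0 < R) :
    ∫ x in R • s, (φ x)^2 = R ^ (n+2) * ∫ x in s, (φ x)^2 := by
  have h := Measure.setIntegral_comp_smul_of_pos (volume) (fun x => (φ x)^2) s hR
  simp only [finrank_euclideanSpace_fin, _root_.map_smul, smul_eq_mul, mul_pow,
    integral_const_mul] at h
  have hRn : (R:ℝ) ^ n ≠ 0 := pow_ne_zero _ hR.ne'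
  field_simp at h ⊢
  rw [← h]; ring

lemma BL.volume_smul_set {n : ℕ} (s : Set (EuclideanSpace ℝ (Fin n))) {R : ℝ} (hR : 0 < R) :
    (volume (R • s)).toReal = R ^ n * (volume s).toReal := by
  rw [Measure.addHaar_smul_of_nonneg volume hR.le s, ENNReal.toReal_mul,
    ENNReal.toReal_ofReal (by positivity), finrank_euclideanSpace_fin]

lemma BL.quad_comp {n : ℕ} {M N : Set (EuclideanSpace ℝ (Fin n))}
    (hMcomp : IsCompact M) (hMint : (interior M).Nonempty) (hNcomp : IsCompact N)
    {a b : ℝ} (ha : 0 < a) (hb : 0 < b) (hsub1 : a • M ⊆ N) (hsub2 : N ⊆ b • M)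
    (φ : EuclideanSpace ℝ (Fin n) →ₗ[ℝ] ℝ) :
    ((n : ℝ) + 2) / (volume N).toReal * ∫ y in N, (φ y) ^ 2 ≤
      (b ^ (n+2) * a⁻¹ ^ n) *
        (((n : ℝ) + 2) / (volume M).toReal * ∫ y in M, (φ y) ^ 2) := by
  set vM := (volume M).toReal with hvM
  set vN := (volume N).toReal with hvN
  have hvMpos : 0 < vM := by
    refine ENNReal.toReal_pos ?_ (hMcomp.measure_lt_top (μ := volume)).ne
    have h1 : 0 < volume (interior M) := isOpen_interior.measure_pos _ hMint
    exact (lt_of_lt_of_le h1 (measure_mono interior_subset)).ne'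
  have hvNle : a ^ n * vM ≤ vN := by
    have := ENNReal.toReal_mono (hNcomp.measure_lt_top (μ := volume)).ne (measure_mono hsub1)
    rwa [BL.volume_smul_set M ha] at this
  have hvNpos : 0 < vN := lt_of_lt_of_le (by positivity) hvNle
  have hIM : 0 ≤ ∫ y in M, (φ y) ^ 2 :=
    integral_nonneg fun y => sq_nonneg _
  have hcont : Continuous fun y : EuclideanSpace ℝ (Fin n) => (φ y) ^ 2 :=
    (φ.continuous_of_finiteDimensional).pow 2
  have hIN : (∫ y in N, (φ y) ^ 2) ≤ b ^ (n+2) * ∫ y in M, (φ y) ^ 2 := by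
    rw [← BL.integral_smul_set M φ hb]
    refine setIntegral_mono_set (hcont.continuousOn.integrableOn_compact (hMcomp.smul b))
      (Filter.Eventually.of_forall fun y => sq_nonneg _) (HasSubset.Subset.eventuallyLE hsub2)
  calc ((n : ℝ) + 2) / vN * ∫ y in N, (φ y) ^ 2
      ≤ ((n : ℝ) + 2) / vN * (b ^ (n+2) * ∫ y in M, (φ y) ^ 2) :=
        mul_le_mul_of_nonneg_left hIN (by positivity)
    _ ≤ ((n : ℝ) + 2) / (a ^ n * vM) * (b ^ (n+2) * ∫ y in M, (φ y) ^ 2) := by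
        refine mul_le_mul_of_nonneg_right ?_ (by positivity)
        exact div_le_div_of_nonneg_left (by positivity) (by positivity) hvNle
    _ = (b ^ (n+2) * a⁻¹ ^ n) * (((n : ℝ) + 2) / vM * ∫ y in M, (φ y) ^ 2) := by
        field_simp
        rw [mul_comm, ← mul_assoc, ← mul_pow, one_div_mul_cancel ha.ne', one_pow, one_mul]

lemma BL.subset_smul {n : ℕ} {M N : Set (EuclideanSpace ℝ (Fin n))} {c : ℝ} (hc : 0 < c)
    (hQ : ∀ φ : EuclideanSpace ℝ (Fin n) →ₗ[ℝ] ℝ,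
      ((n : ℝ) + 2) / (volume M).toReal * ∫ y in M, (φ y) ^ 2 ≤
        c ^ 2 * (((n : ℝ) + 2) / (volume N).toReal * ∫ y in N, (φ y) ^ 2)) :
    binetLegendre M ⊆ c • binetLegendre N := by
  intro x hx
  rw [mem_smul_set_iff_inv_smul_mem₀ hc.ne']
  intro φ hφ
  have key : φ (c⁻¹ • x) = c⁻¹ * φ x := by rw [_root_.map_smul]; rfl
  set ψ : EuclideanSpace ℝ (Fin n) →ₗ[ℝ] ℝ := c⁻¹ • φ with hψ
  have hψy : ∀ y, ψ y = c⁻¹ * φ y := fun y => rfl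
  have hint : (∫ y in M, (ψ y) ^ 2) = c⁻¹ ^ 2 * ∫ y in M, (φ y) ^ 2 := by
    simp only [hψy, mul_pow, integral_const_mul]
  have hx' := hx ψ
  rw [hint] at hx'
  set t := ((n : ℝ) + 2) / (volume M).toReal * ∫ y in M, (φ y) ^ 2 with ht
  set q := ((n : ℝ) + 2) / (volume N).toReal * ∫ y in N, (φ y) ^ 2 with hq
  have h1 : c⁻¹ ^ 2 * t ≤ c⁻¹ ^ 2 * (c ^ 2 * q) :=
    mul_le_mul_of_nonneg_left (hQ φ) (by positivity)
  have h2 : c⁻¹ ^ 2 * (c ^ 2 * q) = q := by field_simp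
  have hψx : ψ x ≤ 1 := by
    apply hx'
    calc ((n : ℝ) + 2) / (volume M).toReal * (c⁻¹ ^ 2 * ∫ y in M, (φ y) ^ 2)
        = c⁻¹ ^ 2 * t := by rw [ht]; ring
      _ ≤ 1 := by linarith
  rw [key]; rw [hψy] at hψx; exact hψx

lemma BL.rpow_sq {x : ℝ} (hx : 0 < x) (e : ℝ) : (x ^ (e / 2)) ^ 2 = x ^ e := by
  rw [← Real.rpow_natCast (x ^ (e / 2)) 2, ← Real.rpow_mul hx.le]
  norm_num

theorem stmt4 {n : ℕ} (K L : Set (EuclideanSpace ℝ (Fin n)))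
    (hKcomp : IsCompact K) (hKconv : Convex ℝ K) (hKint : (interior K).Nonempty)
    (hLcomp : IsCompact L) (hLconv : Convex ℝ L) (hLint : (interior L).Nonempty)
    (hKcent : centroid K = 0) (hLcent : centroid L = 0)
    (lam₁ lam₂ : ℝ) (hlam₁ : 0 < lam₁) (hlam₂ : 0 < lam₂)
    (h₁ : lam₁⁻¹ • K ⊆ L) (h₂ : L ⊆ lam₂ • K) :
    binetLegendre K ⊆
        (lam₁ ^ (((n : ℝ) + 2) / 2) * lam₂ ^ ((n : ℝ) / 2)) • binetLegendre L ∧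
    binetLegendre L ⊆
        (lam₁ ^ ((n : ℝ) / 2) * lam₂ ^ (((n : ℝ) + 2) / 2)) • binetLegendre K := by
  -- derived inclusions
  have h₁' : K ⊆ lam₁ • L := by
    intro x hx
    have : lam₁⁻¹ • x ∈ lam₁⁻¹ • K := smul_mem_smul_set hx
    have hmem : lam₁⁻¹ • x ∈ L := h₁ this
    refine ⟨lam₁⁻¹ • x, hmem, ?_⟩
    exact smul_inv_smul₀ hlam₁.ne' x
  have h₂' : lam₂⁻¹ • L ⊆ K := by
    intro x hx
    obtain ⟨y, hy, rfl⟩ := hx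
    obtain ⟨z, hz, rfl⟩ := h₂ hy
    show lam₂⁻¹ • lam₂ • z ∈ K
    rwa [inv_smul_smul₀ hlam₂.ne']
  -- cast helpers
  have hcast1 : lam₁ ^ ((n : ℝ) + 2) = lam₁ ^ (n + 2) := by
    rw [← Real.rpow_natCast lam₁ (n + 2)]; push_cast; ring_nf
  have hcast2 : lam₂ ^ ((n : ℝ) + 2) = lam₂ ^ (n + 2) := by
    rw [← Real.rpow_natCast lam₂ (n + 2)]; push_cast; ring_nf
  have hcast3 : lam₁ ^ ((n : ℝ)) = lam₁ ^ n := Real.rpow_natCast lam₁ n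
  have hcast4 : lam₂ ^ ((n : ℝ)) = lam₂ ^ n := Real.rpow_natCast lam₂ n
  constructor
  · -- use quad_comp with M = L, N = K, a = lam₂⁻¹, b = lam₁
    refine BL.subset_smul (by positivity) fun φ => ?_
    have h := BL.quad_comp hLcomp hLint hKcomp (a := lam₂⁻¹) (b := lam₁)
      (by positivity) hlam₁ h₂' h₁' φ
    refine h.trans (le_of_eq ?_)
    congr 1
    rw [mul_pow, BL.rpow_sq hlam₁, BL.rpow_sq hlam₂, hcast1, hcast4, inv_inv]
  · -- use quad_comp with M = K, N = L, a = lam₁⁻¹, b = lam₂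
    refine BL.subset_smul (by positivity) fun φ => ?_
    have h := BL.quad_comp hKcomp hKint hLcomp (a := lam₁⁻¹) (b := lam₂)
      (by positivity) hlam₂ h₁ h₂ φ
    refine h.trans (le_of_eq ?_)
    congr 1
    rw [mul_pow, BL.rpow_sq hlam₁, BL.rpow_sq hlam₂, hcast2, hcast3, inv_inv, mul_comm]
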